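/- Let a, b, c be real numbers with a > 0, b ≥ 0, 0 < c < 1, and suppose μ = 1 − (c·b)/(a·√(1 − c²)) satisfies μ ≥ 0. Then √((μ − 1)²·a² + b²) + c·μ·a = c·a + √(1 − c²)·b. Consequently, under the hypotheses of Proposition A.1 (E a complex inner product space, S ⊆ E a complete subspace, B = B∥ + B⊥ the orthogonal decomposition of B with respect to S, B∥ ≠ 0, 0 ≤ c < 1, c·‖B‖ ≤ ‖B∥‖), the infimum over A ∈ S of min{‖A‖, ‖B‖}·c + ‖A − B‖ equals c·‖B∥‖ + √(1 − c²)·‖B⊥‖. -/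

import Mathlib

/-- Auxiliary scalar identity. -/
lemma flat_aux_id (a b c : ℝ) (ha : 0 < a) (hb : 0 ≤ b) (hc0 : 0 ≤ c) (hc1 : c < 1)
    (μ : ℝ) (hμ : μ = 1 - c * b / (a * Real.sqrt (1 - c ^ 2))) :
    Real.sqrt ((μ - 1) ^ 2 * a ^ 2 + b ^ 2) + c * μ * a
      = c * a + Real.sqrt (1 - c ^ 2) * b := by
  have h1 : (0:ℝ) < 1 - c ^ 2 := by nlinarith
  set s := Real.sqrt (1 - c ^ 2) with hs
  have hs0 : 0 < s := Real.sqrt_pos.mpr h1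
  have hs2 : s ^ 2 = 1 - c ^ 2 := Real.sq_sqrt h1.le
  have hμ1 : μ - 1 = -(c * b) / (a * s) := by rw [hμ]; ring
  have key : (μ - 1) ^ 2 * a ^ 2 + b ^ 2 = (b / s) ^ 2 := by
    rw [hμ1]
    field_simp
    linear_combination b ^ 2 * hs2
  rw [key, Real.sqrt_sq (by positivity), hμ]
  field_simp
  linear_combination (-b) * hs2

/-- Auxiliary Cauchy–Schwarz-type inequality. -/
lemma flat_aux_cs (t b c : ℝ) (ht : 0 ≤ t) (hb : 0 ≤ b) (hc0 : 0 ≤ c) (hc1 : c ≤ 1) :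
    c * t + Real.sqrt (1 - c ^ 2) * b ≤ Real.sqrt (t ^ 2 + b ^ 2) := by
  have h1 : (0:ℝ) ≤ 1 - c ^ 2 := by nlinarith
  set s := Real.sqrt (1 - c ^ 2) with hs
  have hs0 : 0 ≤ s := Real.sqrt_nonneg _
  have hs2 : s ^ 2 = 1 - c ^ 2 := Real.sq_sqrt h1
  have h2 : (c * t + s * b) ^ 2 ≤ t ^ 2 + b ^ 2 := by
    nlinarith [sq_nonneg (s * t - c * b)]
  calc c * t + s * b = Real.sqrt ((c * t + s * b) ^ 2) :=
        (Real.sqrt_sq (by positivity)).symm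
    _ ≤ Real.sqrt (t ^ 2 + b ^ 2) := Real.sqrt_le_sqrt h2

/-- Closed-form evaluation of the minimum value in Proposition A.1: the scalar identity
`√((μ-1)²a² + b²) + c·μ·a = c·a + √(1-c²)·b` for the optimal `μ ≥ 0`, and consequently,
under the hypotheses of Proposition A.1, the infimum over `A ∈ S` of
`min{‖A‖,‖B‖}·c + ‖A - B‖` equals `c·‖Bpar‖ + √(1-c²)·‖Bperp‖`. -/
theorem flat_norm_distance_closed_form
    {E : Type*} [NormedAddCommGroup E] [InnerProductSpace ℂ E]
    (S : Submodule ℂ E) [CompleteSpace S] (B : E) (c : ℝ)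
    (hc0 : 0 ≤ c) (hc1 : c < 1)
    (Bpar Bperp : E)
    (hpar : Bpar = (S.orthogonalProjectionOnto B : E))
    (hperp : Bperp = B - Bpar)
    (hBpar : Bpar ≠ 0)
    (hcB : c * ‖B‖ ≤ ‖Bpar‖) :
    (∀ a b c' μ : ℝ, 0 < a → 0 ≤ b → 0 < c' → c' < 1 →
        μ = 1 - (c' * b) / (a * Real.sqrt (1 - c' ^ 2)) → 0 ≤ μ →
        Real.sqrt ((μ - 1) ^ 2 * a ^ 2 + b ^ 2) + c' * μ * a
          = c' * a + Real.sqrt (1 - c' ^ 2) * b) ∧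
    (⨅ A : S, (min ‖(A : E)‖ ‖B‖ * c + ‖(A : E) - B‖))
      = c * ‖Bpar‖ + Real.sqrt (1 - c ^ 2) * ‖Bperp‖ := by
  constructor
  · intro a b c' μ ha hb hc'0 hc'1 hμ _
    exact flat_aux_id a b c' ha hb hc'0.le hc'1 μ hμ
  set p := ‖Bpar‖ with hpdef
  set b := ‖Bperp‖ with hbdef
  have hp : 0 < p := norm_pos_iff.mpr hBpar
  have hb : 0 ≤ b := norm_nonneg _
  have h1 : (0:ℝ) < 1 - c ^ 2 := by nlinarith
  set s := Real.sqrt (1 - c ^ 2) with hs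
  have hs0 : 0 < s := Real.sqrt_pos.mpr h1
  have hs2 : s ^ 2 = 1 - c ^ 2 := Real.sq_sqrt h1.le
  have hs1 : s ≤ 1 := by nlinarith
  have hparS : Bpar ∈ S := by rw [hpar]; exact (S.orthogonalProjectionOnto B).2
  have hperpO : Bperp ∈ Sᗮ := by
    rw [hperp, hpar]; exact S.sub_starProjection_mem_orthogonal B
  have hno : ∀ x y : E, x ∈ S → y ∈ Sᗮ → ‖x + y‖ = Real.sqrt (‖x‖ ^ 2 + ‖y‖ ^ 2) := by
    intro x y hx hy
    have h := norm_add_sq_eq_norm_sq_add_norm_sq_of_inner_eq_zero x y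
      (Submodule.inner_right_of_mem_orthogonal hx hy)
    rw [← Real.sqrt_sq (norm_nonneg (x + y))]
    congr 1
    rw [sq, h]; ring
  have hBsum : B = Bpar + Bperp := by rw [hperp]; abel
  have hBnorm : ‖B‖ = Real.sqrt (p ^ 2 + b ^ 2) := by
    rw [hBsum]; exact hno _ _ hparS hperpO
  have hB2 : ‖B‖ ^ 2 = p ^ 2 + b ^ 2 := by
    rw [hBnorm, Real.sq_sqrt (by positivity)]
  have hBp : p ≤ ‖B‖ := by
    rw [hBnorm]
    calc p = Real.sqrt (p ^ 2) := (Real.sqrt_sq hp.le).symm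
      _ ≤ Real.sqrt (p ^ 2 + b ^ 2) :=
          Real.sqrt_le_sqrt (le_add_of_nonneg_right (sq_nonneg b))
  -- lower bound
  have lower : ∀ A : S, c * p + s * b ≤ min ‖(A : E)‖ ‖B‖ * c + ‖(A : E) - B‖ := by
    intro A
    set t := ‖(A : E) - Bpar‖ with ht
    have htn : 0 ≤ t := norm_nonneg _
    have hABnorm : ‖(A : E) - B‖ = Real.sqrt (t ^ 2 + b ^ 2) := by
      have hrw : (A : E) - B = ((A : E) - Bpar) + (-Bperp) := by rw [hBsum]; abel
      rw [hrw, hno _ _ (S.sub_mem A.2 hparS) (Sᗮ.neg_mem hperpO), norm_neg]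
    have hcs : c * t + s * b ≤ Real.sqrt (t ^ 2 + b ^ 2) :=
      flat_aux_cs t b c htn hb hc0 hc1.le
    rcases le_total ‖(A : E)‖ ‖B‖ with h | h
    · rw [min_eq_left h, hABnorm]
      have hA : p - t ≤ ‖(A : E)‖ := by
        have h2 := norm_sub_norm_le Bpar (A : E)
        rw [norm_sub_rev] at h2
        linarith
      linarith [hcs, mul_le_mul_of_nonneg_right hA hc0]
    · rw [min_eq_right h, hABnorm]
      have h3 : b ≤ Real.sqrt (t ^ 2 + b ^ 2) := by
        calc b = Real.sqrt (b ^ 2) := (Real.sqrt_sq hb).symm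
          _ ≤ Real.sqrt (t ^ 2 + b ^ 2) :=
              Real.sqrt_le_sqrt (le_add_of_nonneg_left (sq_nonneg t))
      linarith [mul_le_mul_of_nonneg_right hBp hc0, mul_le_mul_of_nonneg_right hs1 hb]
  -- upper bound: the minimizer
  have hcb : c * b ≤ p * s := by
    have hq : (c * ‖B‖) ^ 2 ≤ p ^ 2 := by
      nlinarith [mul_nonneg hc0 (norm_nonneg B)]
    have h5 : (c * b) ^ 2 ≤ (p * s) ^ 2 := by nlinarith [hq, hB2, hs2]
    calc c * b = Real.sqrt ((c * b) ^ 2) := (Real.sqrt_sq (mul_nonneg hc0 hb)).symm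
      _ ≤ Real.sqrt ((p * s) ^ 2) := Real.sqrt_le_sqrt h5
      _ = p * s := Real.sqrt_sq (by positivity)
  set μ := 1 - c * b / (p * s) with hμdef
  have hμ0 : 0 ≤ μ := by
    rw [hμdef, sub_nonneg]
    exact div_le_one (by positivity) |>.mpr hcb
  have hμ1 : μ ≤ 1 := by
    rw [hμdef]
    have : 0 ≤ c * b / (p * s) := by positivity
    linarith
  set A₀ : E := (μ : ℂ) • Bpar with hA₀def
  have hA₀S : A₀ ∈ S := S.smul_mem _ hparS
  have hA₀norm : ‖A₀‖ = μ * p := by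
    rw [hA₀def, norm_smul, Complex.norm_real, Real.norm_eq_abs, abs_of_nonneg hμ0]
  have hA₀B : ‖A₀ - B‖ = Real.sqrt ((μ - 1) ^ 2 * p ^ 2 + b ^ 2) := by
    have hrw : A₀ - B = ((μ - 1 : ℝ) : ℂ) • Bpar + (-Bperp) := by
      rw [hA₀def, hBsum]
      push_cast
      rw [sub_smul, one_smul]
      abel
    rw [hrw, hno _ _ (S.smul_mem _ hparS) (Sᗮ.neg_mem hperpO), norm_neg, norm_smul,
      Complex.norm_real, Real.norm_eq_abs, mul_pow, sq_abs]
  have hval : min ‖A₀‖ ‖B‖ * c + ‖A₀ - B‖ = c * p + s * b := by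
    have hmin : min ‖A₀‖ ‖B‖ = μ * p := by
      rw [hA₀norm, min_eq_left]
      calc μ * p ≤ 1 * p := mul_le_mul_of_nonneg_right hμ1 hp.le
        _ = p := one_mul p
        _ ≤ ‖B‖ := hBp
    have hid := flat_aux_id p b c hp hb hc0 hc1 μ hμdef
    rw [hmin, hA₀B]
    rw [← hs] at hid
    linarith
  have hbdd : BddBelow (Set.range fun A : S => min ‖(A : E)‖ ‖B‖ * c + ‖(A : E) - B‖) := by
    refine ⟨c * p + s * b, ?_⟩
    rintro x ⟨A, rfl⟩
    exact lower A
  refine le_antisymm ?_ (le_ciInf lower)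
  have h4 := ciInf_le hbdd (⟨A₀, hA₀S⟩ : S)
  simpa [hval] using h4
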